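/- Let n ≥ 1 and let R be a commutative ring with identity having at least n+1 distinct maximal ideals. Then every proper ideal of R is an n-absorbing {0}-prime ideal if and only if R is isomorphic as a ring to a product F₁ × F₂ × ⋯ × F_{n+1} of n+1 fields. -/

import Mathlib

/-- A proper ideal `P` of a commutative ring `R` is an `n`-absorbing `I`-prime ideal
if whenever a product of `n+1` elements lies in `P \ I*P`, the product of some `n`
of them (all but one) lies in `P`. -/
def IsNAbsorbingIPrime {R : Type*} [CommRing R] (n : ℕ) (I P : Ideal R) : Prop :=
  P ≠ ⊤ ∧ ∀ x : Fin (n + 1) → R, (∏ i, x i) ∈ P → (∏ i, x i) ∉ I * P →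
    ∃ i : Fin (n + 1), (∏ j ∈ Finset.univ.erase i, x j) ∈ P

universe u

theorem stmt_18 (n : ℕ) (hn : 1 ≤ n) {R : Type u} [CommRing R]
    (hmax : ∃ M : Fin (n + 1) → Ideal R, Function.Injective M ∧ ∀ i, (M i).IsMaximal) :
    (∀ P : Ideal R, P ≠ ⊤ → IsNAbsorbingIPrime n (⊥ : Ideal R) P) ↔
      ∃ (F : Fin (n + 1) → Type u) (_ : ∀ i, Field (F i)),
        Nonempty (R ≃+* ∀ i, F i) := by
  classical
  obtain ⟨M, Minj, Mmax⟩ := hmax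
  constructor
  · intro hP
    have primeM : ∀ i, (M i).IsPrime := fun i => (Mmax i).isPrime
    have hJtop : (⨅ i, M i) ≠ ⊤ := fun h =>
      (Mmax 0).ne_top (top_le_iff.mp (h ▸ iInf_le M 0))
    -- Claim A: products of "independent" elements vanish
    have claimA : ∀ c : Fin (n + 1) → R, (∀ i, c i ∈ M i) →
        (∀ i j, i ≠ j → c i ∉ M j) → ∏ i, c i = 0 := by
      intro c hc hc'
      by_contra hne
      obtain ⟨-, habs⟩ := hP _ hJtop
      have hmem : (∏ i, c i) ∈ ⨅ i, M i := by
        rw [Submodule.mem_iInf]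
        intro i
        rw [← Finset.mul_prod_erase Finset.univ c (Finset.mem_univ i)]
        exact Ideal.mul_mem_right _ _ (hc i)
      obtain ⟨i, hi⟩ := habs c hmem (by
        simp only [Ideal.bot_mul, Ideal.mem_bot]; exact hne)
      have h2 : (∏ j ∈ Finset.univ.erase i, c j) ∈ M i :=
        (Submodule.mem_iInf _).mp hi i
      haveI := primeM i
      rw [Ideal.IsPrime.prod_mem_iff] at h2
      obtain ⟨j, hj, hj2⟩ := h2
      exact hc' j i (Finset.ne_of_mem_erase hj) hj2
    -- prime avoidance
    have avoid : ∀ (i : Fin (n + 1)) (N : Ideal R), N.IsPrime → ¬(M i ≤ N) →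
        ∃ a, a ∈ M i ∧ (∀ j, j ≠ i → a ∉ M j) ∧ a ∉ N := by
      intro i N hN hle
      set s : Finset (Option (Fin (n + 1))) :=
        insert none ((Finset.univ.erase i).image some) with hs
      have key : ¬((M i : Set R) ⊆ ⋃ o ∈ (↑s : Set (Option (Fin (n + 1)))),
          ((Option.elim o N M : Ideal R) : Set R)) := by
        rw [Ideal.subset_union_prime none none (fun o _ _ _ => ?_)]
        · rintro ⟨o, ho, hle'⟩
          match o with
          | none => exact hle hle'
          | some j =>
            have hj : j ≠ i := by
              simp only [hs, Finset.mem_insert, Finset.mem_image, Finset.mem_erase] at ho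
              rcases ho with h | ⟨j', ⟨hj', -⟩, hjj⟩
              · exact absurd h (by simp)
              · cases Option.some.inj hjj; exact hj'
            have : M i = M j := (Mmax i).eq_of_le (Mmax j).ne_top hle'
            exact hj (Minj this.symm)
        · match o with
          | none => exact hN
          | some j => exact primeM j
      obtain ⟨a, haM, ha⟩ := Set.not_subset.mp key
      refine ⟨a, haM, ?_, ?_⟩
      · intro j hj hmem
        exact ha (Set.mem_biUnion (show (some j) ∈ (↑s : Set (Option (Fin (n+1)))) by
          simp [hs, hj]) hmem)
      · intro hmem
        exact ha (Set.mem_biUnion (show (none : Option (Fin (n+1))) ∈ (↑s : Set (Option (Fin (n+1)))) by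
          simp [hs]) hmem)
    -- Claim B: elements of the intersection are annihilated outside any maximal ideal
    have claimB : ∀ x ∈ (⨅ i, M i), ∀ N : Ideal R, N.IsMaximal →
        ∃ t, t ∉ N ∧ t * x = 0 := by
      intro x hx N hNmax
      have hxM : ∀ i, x ∈ M i := (Submodule.mem_iInf _).mp hx
      obtain ⟨k, hk⟩ : ∃ k : Fin (n + 1), ∀ j, j ≠ k → N ≠ M j := by
        by_cases h : ∃ j, N = M j
        · obtain ⟨j, rfl⟩ := h
          exact ⟨j, fun j' hj' hEq => hj' ((Minj hEq).symm)⟩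
        · push_neg at h; exact ⟨0, fun j _ => h j⟩
      have ha : ∀ j : Fin (n + 1), ∃ a, a ∈ M j ∧ (∀ l, l ≠ j → a ∉ M l) ∧
          (j ≠ k → a ∉ N) := by
        intro j
        by_cases hj : j = k
        · subst hj
          obtain ⟨k', hk'⟩ : ∃ k' : Fin (n + 1), k' ≠ j := by
            refine ⟨⟨if (j : ℕ) = 0 then 1 else 0, by split <;> omega⟩, ?_⟩
            intro h
            rw [Fin.ext_iff] at h
            simp only at h
            split at h <;> omega
          obtain ⟨a, h1, h2, h3⟩ := avoid j (M k') (primeM k') (fun hle =>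
            hk' (Minj ((Mmax j).eq_of_le (Mmax k').ne_top hle).symm))
          exact ⟨a, h1, h2, fun h => absurd rfl h⟩
        · obtain ⟨a, h1, h2, h3⟩ := avoid j N hNmax.isPrime (fun hle =>
            hk j hj ((Mmax j).eq_of_le hNmax.ne_top hle).symm)
          exact ⟨a, h1, h2, fun _ => h3⟩
      choose a haM haM' haN using ha
      set t := ∏ j ∈ Finset.univ.erase k, a j with ht
      have htN : t ∉ N := by
        intro htmem
        haveI := hNmax.isPrime
        rw [Ideal.IsPrime.prod_mem_iff] at htmem
        obtain ⟨j, hj, hjN⟩ := htmem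
        exact haN j (Finset.ne_of_mem_erase hj) hjN
      refine ⟨t, htN, ?_⟩
      have h1 : ∏ i, a i = 0 :=
        claimA a haM (fun i j hij => haM' i j (Ne.symm hij))
      set c : Fin (n + 1) → R := Function.update a k (a k + x) with hcdef
      have h2 : ∏ i, c i = 0 := by
        refine claimA c (fun i => ?_) (fun i j hij => ?_)
        · rcases eq_or_ne i k with rfl | hik
          · simp only [c, Function.update_self]
            exact (M i).add_mem (haM i) (hxM i)
          · simp only [c, Function.update_of_ne hik]
            exact haM i
        · rcases eq_or_ne i k with rfl | hik
          · simp only [c, Function.update_self]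
            intro hmem
            exact haM' i j (Ne.symm hij) (by
              have : a i = (a i + x) - x := by ring
              rw [this]; exact (M j).sub_mem hmem (hxM j))
          · simp only [c, Function.update_of_ne hik]
            exact haM' i j (Ne.symm hij)
      have hce : ∏ j ∈ Finset.univ.erase k, c j = t := by
        refine Finset.prod_congr rfl (fun j hj => ?_)
        simp only [c, Function.update_of_ne (Finset.ne_of_mem_erase hj)]
      have e1 : a k * t = 0 := by
        rw [← Finset.mul_prod_erase Finset.univ a (Finset.mem_univ k)] at h1
        exact h1
      have e2 : (a k + x) * t = 0 := by
        rw [← Finset.mul_prod_erase Finset.univ c (Finset.mem_univ k), hce,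
          hcdef, Function.update_self] at h2
        exact h2
      linear_combination e2 - e1
    -- the intersection is zero
    have hbot : (⨅ i, M i) = ⊥ := by
      rw [eq_bot_iff]
      intro x hx
      rw [Ideal.mem_bot]
      by_contra hxne
      have hT : Ideal.torsionOf R R x ≠ ⊤ := by
        intro h
        have : (1 : R) ∈ Ideal.torsionOf R R x := h ▸ Submodule.mem_top
        rw [Ideal.mem_torsionOf_iff, one_smul] at this
        exact hxne this
      obtain ⟨N, hNmax, hTN⟩ := Ideal.exists_le_maximal _ hT
      obtain ⟨t, htN, htx⟩ := claimB x hx N hNmax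
      exact htN (hTN (by rw [Ideal.mem_torsionOf_iff, smul_eq_mul]; exact htx))
    -- Chinese Remainder Theorem
    have hcop : Pairwise (Function.onFun IsCoprime M) := fun i j hij =>
      Ideal.isCoprime_iff_sup_eq.mpr <|
        (Mmax i).coprime_of_ne (Mmax j) (fun h => hij (Minj h))
    refine ⟨fun i => R ⧸ M i, fun i => @Ideal.Quotient.field _ _ (M i) (Mmax i), ⟨?_⟩⟩
    exact (RingEquiv.quotientBot R).symm.trans
      ((Ideal.quotEquivOfEq hbot.symm).trans
        (Ideal.quotientInfRingEquivPiQuotient M hcop))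
  · rintro ⟨F, hF, ⟨e⟩⟩ P hPtop
    letI : ∀ i, Field (F i) := hF
    refine ⟨hPtop, ?_⟩
    intro x hxP hxne
    rw [Ideal.bot_mul, Ideal.mem_bot] at hxne
    set y : Fin (n + 1) → (∀ i, F i) := fun k => e (x k) with hy
    have hprod : ∀ j, e (∏ k, x k) j = ∏ k, y k j := by
      intro j
      rw [map_prod]
      exact Finset.prod_apply j Finset.univ y
    have hpne : e (∏ k, x k) ≠ 0 := fun h =>
      hxne (by simpa using e.injective (h.trans (map_zero e).symm))
    have hgood : ∃ k : Fin (n + 1), ∀ j, e (∏ i, x i) j = 0 →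
        ∃ l, l ≠ k ∧ y l j = 0 := by
      by_contra hc
      push_neg at hc
      choose g hg1 hg2 using hc
      have ginj : Function.Injective g := by
        intro k k' h
        by_contra hkk'
        have hz : y k (g k) = 0 := by
          have h0 : ∏ l, y l (g k) = 0 := by rw [← hprod]; exact hg1 k
          obtain ⟨l, -, hl⟩ := Finset.prod_eq_zero_iff.mp h0
          rcases eq_or_ne l k with rfl | hlk
          · exact hl
          · exact absurd hl (fun hl0 => hg2 k l hlk hl0)
        rw [h] at hz
        exact hg2 k' k (fun hh => hkk' hh) hz
      have gsurj : Function.Surjective g :=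
        Finite.surjective_of_injective ginj
      apply hpne
      funext j
      obtain ⟨k, rfl⟩ := gsurj j
      exact hg1 k
    obtain ⟨k, hk⟩ := hgood
    refine ⟨k, ?_⟩
    set p : ∀ i, F i := e (∏ i, x i) with hp
    set q : ∀ i, F i := e (∏ j ∈ Finset.univ.erase k, x j) with hq
    have hqj : ∀ j, q j = ∏ m ∈ Finset.univ.erase k, y m j := by
      intro j
      rw [hq, map_prod]
      exact Finset.prod_apply j _ y
    have hqz : ∀ j, p j = 0 → q j = 0 := by
      intro j hj
      obtain ⟨l, hlk, hl⟩ := hk j hj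
      rw [hqj]
      exact Finset.prod_eq_zero (Finset.mem_erase.mpr ⟨hlk, Finset.mem_univ l⟩) hl
    set v : ∀ i, F i := fun j => if p j = 0 then 0 else q j * (p j)⁻¹ with hv
    have hvq : v * p = q := by
      funext j
      by_cases h : p j = 0
      · simp [hv, h, hqz j h]
      · simp only [Pi.mul_apply, hv, if_neg h]
        field_simp
    have key : (∏ j ∈ Finset.univ.erase k, x j) = e.symm v * ∏ i, x i := by
      apply e.injective
      rw [map_mul, RingEquiv.apply_symm_apply]
      exact hvq.symm
    rw [key]
    exact Ideal.mul_mem_left _ _ hxP
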